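/- Let u, v ∈ ℝ^d, L > 0, and γ: [0,1] → ℝ^d a C¹ curve with γ(0)=u, γ(1)=v and arc length at most L. Let k(x,y) = σ² exp(−‖x−y‖²/(2ℓ²)) with σ, ℓ > 0, fix ε ∈ (0,σ²), and set r := ℓ√(2 log(σ²/ε)). If x ∉ E(u,v,L) ⊕ B̄(0,r) (the Minkowski sum of the ellipse with the closed ball of radius r), then k(x, γ(t)) < ε for all t ∈ [0,1]. -/

import Mathlib

open Pointwise

theorem kernel_influence_minkowski {d : ℕ}
    (u v : EuclideanSpace ℝ (Fin d)) (L : ℝ) (hL : 0 < L)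
    (γ : ℝ → EuclideanSpace ℝ (Fin d)) (hγ : ContDiff ℝ 1 γ)
    (h0 : γ 0 = u) (h1 : γ 1 = v)
    (hlen : (∫ t in (0:ℝ)..1, ‖deriv γ t‖) ≤ L)
    (σ ℓ ε : ℝ) (hσ : 0 < σ) (hℓ : 0 < ℓ) (hε : ε ∈ Set.Ioo 0 (σ^2))
    (x : EuclideanSpace ℝ (Fin d))
    (hx : x ∉ {y : EuclideanSpace ℝ (Fin d) | ‖y - u‖ + ‖y - v‖ ≤ L} +
        Metric.closedBall (0 : EuclideanSpace ℝ (Fin d)) (ℓ * Real.sqrt (2 * Real.log (σ^2 / ε)))) :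
    ∀ t ∈ Set.Icc (0:ℝ) 1, σ^2 * Real.exp (-‖x - γ t‖^2 / (2 * ℓ^2)) < ε := by
  obtain ⟨hε0, hεσ⟩ := hε
  set r : ℝ := ℓ * Real.sqrt (2 * Real.log (σ^2 / ε)) with hr
  have hlog : 0 ≤ Real.log (σ^2 / ε) := by
    apply Real.log_nonneg
    rw [le_div_iff₀ hε0]; linarith
  have hr0 : 0 ≤ r := mul_nonneg hℓ.le (Real.sqrt_nonneg _)
  intro t ht
  have hdiff : Differentiable ℝ γ := hγ.differentiable one_ne_zero
  have hcont : Continuous (fun s => ‖deriv γ s‖) :=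
    (hγ.continuous_deriv le_rfl).norm
  -- γ t is in the ellipse
  have hkey : ∀ a b : ℝ, a ≤ b → ‖γ b - γ a‖ ≤ ∫ s in a..b, ‖deriv γ s‖ := by
    intro a b hab
    have hftc : (∫ s in a..b, deriv γ s) = γ b - γ a :=
      intervalIntegral.integral_deriv_eq_sub (fun s _ => hdiff s)
        ((hγ.continuous_deriv le_rfl).intervalIntegrable a b)
    rw [← hftc]
    exact intervalIntegral.norm_integral_le_integral_norm hab
  have hsplit : (∫ s in (0:ℝ)..t, ‖deriv γ s‖) + (∫ s in t..1, ‖deriv γ s‖)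
      = ∫ s in (0:ℝ)..1, ‖deriv γ s‖ :=
    intervalIntegral.integral_add_adjacent_intervals
      (hcont.intervalIntegrable 0 t) (hcont.intervalIntegrable t 1)
  have h1t : ‖γ t - u‖ + ‖γ t - v‖ ≤ L := by
    have hA := hkey 0 t ht.1
    have hB := hkey t 1 ht.2
    rw [h0] at hA
    rw [h1] at hB
    rw [norm_sub_rev (γ t) v]
    linarith
  -- distance bound
  have hdist : r < ‖x - γ t‖ := by
    by_contra h
    push_neg at h
    apply hx
    refine ⟨γ t, h1t, x - γ t, ?_, by module⟩
    simpa [Metric.mem_closedBall, dist_eq_norm] using h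
  have hpos : 0 < 2 * ℓ^2 := by positivity
  have hrsq : r^2 = 2 * ℓ^2 * Real.log (σ^2 / ε) := by
    rw [hr, mul_pow, Real.sq_sqrt (by linarith)]
    ring
  have hexp : σ^2 * Real.exp (-r^2 / (2 * ℓ^2)) = ε := by
    rw [hrsq]
    have : -(2 * ℓ^2 * Real.log (σ^2 / ε)) / (2 * ℓ^2) = -Real.log (σ^2 / ε) := by
      field_simp
    rw [this, Real.exp_neg, Real.exp_log (by positivity)]
    field_simp
  calc σ^2 * Real.exp (-‖x - γ t‖^2 / (2 * ℓ^2))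
      < σ^2 * Real.exp (-r^2 / (2 * ℓ^2)) := by
        apply mul_lt_mul_of_pos_left _ (by positivity)
        apply Real.exp_lt_exp.mpr
        apply div_lt_div_of_pos_right _ hpos
        have : r^2 < ‖x - γ t‖^2 := by
          apply sq_lt_sq' (by linarith [norm_nonneg (x - γ t)]) hdist
        linarith
    _ = ε := hexp
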